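/- Let δ > 0, β₀ > 0, β₁ < 0, τ_c > 0, ω_c > 0 with Δ(iω_c, τ_c) = 0 and Δ_λ(iω_c, τ_c) ≠ 0. Define c₂ = 2β₀β₁/τ_c, q(s) = e^{iω_c s} for s ∈ [−τ_c, 0], q*(s) = d·e^{iω_c s} for s ∈ [0, τ_c] with conj(d) = Δ_λ(iω_c, τ_c)^{−1}, and the bilinear form ⟨ψ, φ⟩ = conj(ψ(0))·φ(0) − c₂·∫_{−τ_c}^{0} ( ∫_{0}^{s} conj(ψ(ξ − s))·φ(ξ) dξ ) ds for continuous ψ : [0, τ_c] → ℂ and φ : [−τ_c, 0] → ℂ. Then ⟨q*, q⟩ = 1 and ⟨q*, conj(q)⟩ = 0. -/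

import Mathlib

/-- The characteristic function
`Δ(λ,τ) = λ + δ + β₀β₁ − (2β₀β₁/τ)∫_{−τ}^{0} e^{λ s} ds`, for `λ ∈ ℂ`. -/
noncomputable def charFn (δ β₀ β₁ τ : ℝ) (lam : ℂ) : ℂ :=
  lam + (δ : ℂ) + (β₀ : ℂ) * (β₁ : ℂ) -
    ((2 * β₀ * β₁ / τ : ℝ) : ℂ) * ∫ s in (-τ)..(0 : ℝ), Complex.exp (lam * (s : ℂ))

/-- `Δ_λ(λ,τ) = 1 − (2β₀β₁/τ)∫_{−τ}^{0} s e^{λ s} ds`, the partial derivative in `λ`. -/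
noncomputable def charFnD (β₀ β₁ τ : ℝ) (lam : ℂ) : ℂ :=
  1 - ((2 * β₀ * β₁ / τ : ℝ) : ℂ) * ∫ s in (-τ)..(0 : ℝ), (s : ℂ) * Complex.exp (lam * (s : ℂ))

/-- The Hale bilinear pairing
`⟨ψ, φ⟩ = conj(ψ(0)) φ(0) − c₂ ∫_{−τ_c}^{0} (∫_{0}^{s} conj(ψ(ξ − s)) φ(ξ) dξ) ds`. -/
noncomputable def pairing (c₂ τ_c : ℝ) (ψ φ : ℝ → ℂ) : ℂ :=
  (starRingEnd ℂ) (ψ 0) * φ 0 -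
    (c₂ : ℂ) * ∫ s in (-τ_c)..(0 : ℝ), ∫ ξ in (0 : ℝ)..s, (starRingEnd ℂ) (ψ (ξ - s)) * φ ξ

/-- with `q(s) = e^{iω_c s}`, `q*(s) = d e^{iω_c s}` and
`conj d = Δ_λ(iω_c, τ_c)⁻¹`, the Hale pairing satisfies `⟨q*, q⟩ = 1` and
`⟨q*, conj q⟩ = 0`. -/
theorem norming_conditions
    (δ β₀ β₁ τ_c ω_c : ℝ) (hδ : 0 < δ) (hβ₀ : 0 < β₀) (hβ₁ : β₁ < 0)
    (hτ_c : 0 < τ_c) (hω_c : 0 < ω_c)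
    (hzero : charFn δ β₀ β₁ τ_c (Complex.I * (ω_c : ℂ)) = 0)
    (hsimple : charFnD β₀ β₁ τ_c (Complex.I * (ω_c : ℂ)) ≠ 0)
    (d : ℂ) (hd : (starRingEnd ℂ) d = (charFnD β₀ β₁ τ_c (Complex.I * (ω_c : ℂ)))⁻¹)
    (q qstar : ℝ → ℂ)
    (hq : ∀ s : ℝ, q s = Complex.exp (Complex.I * (ω_c : ℂ) * (s : ℂ)))
    (hqstar : ∀ s : ℝ, qstar s = d * Complex.exp (Complex.I * (ω_c : ℂ) * (s : ℂ))) :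
    pairing (2 * β₀ * β₁ / τ_c) τ_c qstar q = 1 ∧
    pairing (2 * β₀ * β₁ / τ_c) τ_c qstar (fun s => (starRingEnd ℂ) (q s)) = 0 := by
  have hIω : Complex.I * (ω_c : ℂ) ≠ 0 :=
    mul_ne_zero Complex.I_ne_zero (by exact_mod_cast hω_c.ne')
  constructor
  · -- part 1
    have inner1 : ∀ s : ℝ,
        (∫ ξ in (0:ℝ)..s, (starRingEnd ℂ) (qstar (ξ - s)) * q ξ)
          = (starRingEnd ℂ) d * ((s:ℂ) * Complex.exp (Complex.I * (ω_c:ℂ) * (s:ℂ))) := by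
      intro s
      have hpt : ∀ ξ : ℝ, (starRingEnd ℂ) (qstar (ξ - s)) * q ξ
          = (starRingEnd ℂ) d * Complex.exp (Complex.I * (ω_c:ℂ) * (s:ℂ)) := by
        intro ξ
        rw [hqstar, hq, map_mul, ← Complex.exp_conj, mul_assoc, ← Complex.exp_add]
        congr 2
        simp only [map_mul, Complex.conj_I, Complex.conj_ofReal]
        push_cast
        ring
      simp only [hpt, intervalIntegral.integral_const, sub_zero, Complex.real_smul]
      ring
    have key : pairing (2*β₀*β₁/τ_c) τ_c qstar q
        = (starRingEnd ℂ) d * charFnD β₀ β₁ τ_c (Complex.I * (ω_c:ℂ)) := by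
      unfold pairing charFnD
      simp only [inner1]
      rw [intervalIntegral.integral_const_mul, hqstar 0, hq 0]
      simp only [Complex.ofReal_zero, mul_zero, Complex.exp_zero, mul_one, map_mul, map_one]
      ring
    rw [key, hd, inv_mul_cancel₀ hsimple]
  · -- part 2
    unfold charFn at hzero
    unfold pairing
    beta_reduce
    have h2Iω : -(2 * (Complex.I * (ω_c:ℂ))) ≠ 0 :=
      neg_ne_zero.mpr (mul_ne_zero two_ne_zero hIω)
    have hnegIω : -(Complex.I * (ω_c:ℂ)) ≠ 0 := neg_ne_zero.mpr hIω
    have inner2 : ∀ s : ℝ,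
        (∫ ξ in (0:ℝ)..s, (starRingEnd ℂ) (qstar (ξ - s)) * (starRingEnd ℂ) (q ξ))
          = (starRingEnd ℂ) d / (2 * (Complex.I * (ω_c:ℂ))) *
            (Complex.exp (Complex.I * (ω_c:ℂ) * (s:ℂ)) - Complex.exp (-(Complex.I * (ω_c:ℂ)) * (s:ℂ))) := by
      intro s
      have hpt : ∀ ξ : ℝ, (starRingEnd ℂ) (qstar (ξ - s)) * (starRingEnd ℂ) (q ξ)
          = ((starRingEnd ℂ) d * Complex.exp (Complex.I * (ω_c:ℂ) * (s:ℂ))) *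
            Complex.exp (-(2 * (Complex.I * (ω_c:ℂ))) * (ξ:ℂ)) := by
        intro ξ
        rw [hqstar, hq]
        simp only [map_mul, ← Complex.exp_conj, Complex.conj_I, Complex.conj_ofReal,
          mul_assoc, ← Complex.exp_add]
        congr 2
        push_cast
        ring
      simp only [hpt]
      rw [intervalIntegral.integral_const_mul, integral_exp_mul_complex h2Iω]
      have hmul : Complex.exp (-(Complex.I * (ω_c:ℂ)) * (s:ℂ))
          = Complex.exp (Complex.I * (ω_c:ℂ) * (s:ℂ)) *
            Complex.exp (-(2 * (Complex.I * (ω_c:ℂ))) * (s:ℂ)) := by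
        rw [← Complex.exp_add]; congr 1; ring
      rw [hmul]
      simp only [Complex.ofReal_zero, mul_zero, Complex.exp_zero]
      field_simp
      ring
    have hc1 : Continuous fun s:ℝ => Complex.exp (Complex.I * (ω_c:ℂ) * (s:ℂ)) := by fun_prop
    have hc2 : Continuous fun s:ℝ => Complex.exp (-(Complex.I * (ω_c:ℂ)) * (s:ℂ)) := by fun_prop
    rw [integral_exp_mul_complex hIω] at hzero
    have h2 := congrArg (starRingEnd ℂ) hzero
    simp only [map_sub, map_add, map_mul, map_div₀, map_one, map_zero, Complex.conj_I,
      Complex.conj_ofReal, ← Complex.exp_conj] at h2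
    simp only [inner2]
    rw [intervalIntegral.integral_const_mul,
      intervalIntegral.integral_sub (hc1.intervalIntegrable _ _) (hc2.intervalIntegrable _ _),
      integral_exp_mul_complex hIω, integral_exp_mul_complex hnegIω, hqstar 0, hq 0]
    simp only [Complex.ofReal_zero, mul_zero, Complex.exp_zero, mul_one, map_mul, map_one]
    simp only [Complex.ofReal_zero, Complex.ofReal_neg, mul_zero, Complex.exp_zero, neg_mul,
      mul_neg, neg_neg] at hzero h2 ⊢
    set w := Complex.I * (ω_c:ℂ) with hw
    set c2 := ((2*β₀*β₁/τ_c : ℝ):ℂ) with hc2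
    set E := Complex.exp (-(w * (τ_c:ℂ))) with hE
    set F := Complex.exp (w * (τ_c:ℂ)) with hF
    clear_value w c2 E F
    have h1' : c2 * (1 - E) = (w + ↑δ + ↑β₀*↑β₁) * w := by
      field_simp at hzero; linear_combination -hzero
    have h2' : c2 * (1 - F) = (w - ↑δ - ↑β₀*↑β₁) * w := by
      field_simp at h2; linear_combination h2
    field_simp
    linear_combination (-(starRingEnd ℂ) d) * h1' + (-(starRingEnd ℂ) d) * h2'
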